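/- Let q(p) = p⁴ + 1 and define H = q·q'' − (3/4)(q')², T = q²·q''' − (3/2)·q·q'·q'' + (3/4)(q')³, and V = q³·q'''' − q²·q'·q''' + (3/4)·q·(q')²·q'' − (9/32)(q')⁴ (the classifying invariants of binary quartics, m = 4, restricted to q). Then for every real p ≠ 0: T(p)²/H(p)³ = (p⁴ − 1)²/(3p⁴), V(p)/H(p)² = (p⁸ − p⁴ + 1)/(6p⁴), and consequently the signature point (T₁, T₂) = (T²/H³, V/H²) satisfies the linear relation 6T₂ − 3T₁ − 1 = 0. -/

import Mathlib

/-- The inhomogeneous counterpart q(p) = p⁴ + 1 of the binary quartic x⁴ + y⁴. -/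
noncomputable def q18 : ℝ → ℝ := fun p => p ^ 4 + 1

/-- H = q·q'' − (3/4)(q')². -/
noncomputable def H18 (p : ℝ) : ℝ :=
  q18 p * deriv (deriv q18) p - (3 / 4) * (deriv q18 p) ^ 2

/-- T = q²·q''' − (3/2)·q·q'·q'' + (3/4)(q')³. -/
noncomputable def T18 (p : ℝ) : ℝ :=
  q18 p ^ 2 * deriv (deriv (deriv q18)) p -
    (3 / 2) * q18 p * deriv q18 p * deriv (deriv q18) p +
    (3 / 4) * (deriv q18 p) ^ 3

/-- V = q³·q'''' − q²·q'·q''' + (3/4)·q·(q')²·q'' − (9/32)(q')⁴. -/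
noncomputable def V18 (p : ℝ) : ℝ :=
  q18 p ^ 3 * deriv (deriv (deriv (deriv q18))) p -
    q18 p ^ 2 * deriv q18 p * deriv (deriv (deriv q18)) p +
    (3 / 4) * q18 p * (deriv q18 p) ^ 2 * deriv (deriv q18) p -
    (9 / 32) * (deriv q18 p) ^ 4


lemma d1_18 : deriv q18 = fun p => 4 * p ^ 3 := by
  funext p
  have h : HasDerivAt q18 (4 * p ^ 3) p := by
    have := ((hasDerivAt_pow 4 p).add_const 1)
    refine this.congr_deriv ?_
    push_cast; ring
  exact h.deriv

lemma d2_18 : deriv (deriv q18) = fun p => 12 * p ^ 2 := by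
  rw [d1_18]
  funext p
  have h : HasDerivAt (fun p : ℝ => 4 * p ^ 3) (12 * p ^ 2) p := by
    have := (hasDerivAt_pow 3 p).const_mul (4 : ℝ)
    refine this.congr_deriv ?_
    push_cast; ring
  exact h.deriv

lemma d3_18 : deriv (deriv (deriv q18)) = fun p => 24 * p := by
  rw [d2_18]
  funext p
  have h : HasDerivAt (fun p : ℝ => 12 * p ^ 2) (24 * p) p := by
    have := (hasDerivAt_pow 2 p).const_mul (12 : ℝ)
    refine this.congr_deriv ?_
    push_cast; ring
  exact h.deriv

lemma d4_18 : deriv (deriv (deriv (deriv q18))) = fun p => (24 : ℝ) := by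
  rw [d3_18]
  funext p
  have h : HasDerivAt (fun p : ℝ => 24 * p) (24 : ℝ) p := by
    simpa using (hasDerivAt_id p).const_mul (24 : ℝ)
  exact h.deriv

/-- The signature of the binary quartic x⁴ + y⁴: explicit parametrization of the
classifying invariants (T₁, T₂) = (T²/H³, V/H²) and the linear signature relation
6T₂ − 3T₁ − 1 = 0. -/
theorem stmt_18 (p : ℝ) (hp : p ≠ 0) :
    T18 p ^ 2 / H18 p ^ 3 = (p ^ 4 - 1) ^ 2 / (3 * p ^ 4) ∧
    V18 p / H18 p ^ 2 = (p ^ 8 - p ^ 4 + 1) / (6 * p ^ 4) ∧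
    6 * (V18 p / H18 p ^ 2) - 3 * (T18 p ^ 2 / H18 p ^ 3) - 1 = 0 := by
  have hH : H18 p = 12 * p ^ 2 := by
    simp only [H18]; rw [d2_18, d1_18]; simp only [q18]; ring
  have hT : T18 p = 24 * p * (1 - p ^ 4) := by
    simp only [T18]; rw [d3_18, d2_18, d1_18]; simp only [q18]; ring
  have hV : V18 p = 24 * (p ^ 8 - p ^ 4 + 1) := by
    simp only [V18]; rw [d4_18, d3_18, d2_18, d1_18]; simp only [q18]; ring
  have h1 : T18 p ^ 2 / H18 p ^ 3 = (p ^ 4 - 1) ^ 2 / (3 * p ^ 4) := by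
    rw [hH, hT]; field_simp; ring
  have h2 : V18 p / H18 p ^ 2 = (p ^ 8 - p ^ 4 + 1) / (6 * p ^ 4) := by
    rw [hH, hV]; field_simp; ring
  refine ⟨h1, h2, ?_⟩
  rw [h1, h2]
  field_simp
  ring
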